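/- Let A¹ = (a¹_{ij}) be an admissible matrix field on ℝⁿ with an invariant measure r¹ and a corrector pair (v¹¹, ā¹₁₁) for (k,l) = (1,1). Let φ : ℝⁿ → ℝ be C², ℤⁿ-periodic, with 1 + a¹_{ij}(y) ∂_{y_i}∂_{y_j}φ(y) ≥ 1/2 for all y ∈ ℝⁿ. Define γ := (1 + a¹_{ij} ∂_{y_i}∂_{y_j}φ)^{-1}, a_{ij} := γ a¹_{ij}, r := r¹/γ, and v := v¹¹ + ā¹₁₁ φ. Then: (i) −a_{ij}(y) ∂_{y_i}∂_{y_j} v(y) − a₁₁(y) = −ā¹₁₁ for all y ∈ ℝⁿ (v solves the (1,1)-cell problem for A = (a_{ij}) with the same effective constant ā¹₁₁); (ii) ∂_{y_i}∂_{y_j}(a_{ij}(y) r(y)) = 0 for all y ∈ ℝⁿ; and (iii) ∫_{[0,1]ⁿ} a_{i1}(y) ∂_{y_i} v(y) r(y) dy = ∫_{[0,1]ⁿ} a¹_{i1}(y) ∂_{y_i} v¹¹(y) r¹(y) dy − ā¹₁₁ ∫_{[0,1]ⁿ} (Σ_{i=1}^n ∂_{y_i}(a¹_{i1}(y) r¹(y)))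 φ(y) dy. -/

import Mathlib

open MeasureTheory

/-- The unit cube `[0,1]^n` in `ℝ^n`. -/
def unitCube (n : ℕ) : Set (Fin n → ℝ) := Set.Icc 0 1

/-- Partial derivative `∂_{y_i} f`. -/
noncomputable def pd {n : ℕ} (f : (Fin n → ℝ) → ℝ) (i : Fin n) : (Fin n → ℝ) → ℝ :=
  fun y => fderiv ℝ f y (Pi.single i 1)

/-- Second partial derivative `∂_{y_i} ∂_{y_j} f`. -/
noncomputable def pd2 {n : ℕ} (f : (Fin n → ℝ) → ℝ) (i j : Fin n) : (Fin n → ℝ) → ℝ :=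
  pd (pd f j) i

/-- Third partial derivative `∂_{y_i} ∂_{y_j} ∂_{y_k} f`. -/
noncomputable def pd3 {n : ℕ} (f : (Fin n → ℝ) → ℝ) (i j k : Fin n) : (Fin n → ℝ) → ℝ :=
  pd (pd (pd f k) j) i

/-- `ℤ^n`-periodicity. -/
def ZPeriodic {n : ℕ} (f : (Fin n → ℝ) → ℝ) : Prop :=
  ∀ (y : Fin n → ℝ) (z : Fin n → ℤ), f (y + fun i => (z i : ℝ)) = f y

/-- Admissible matrix field: C², periodic, symmetric, uniformly elliptic. -/
def IsAdmissible {n : ℕ} (a : Fin n → Fin n → (Fin n → ℝ) → ℝ) : Prop :=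
  (∀ i j, ContDiff ℝ 2 (a i j)) ∧
  (∀ i j, ZPeriodic (a i j)) ∧
  (∀ i j y, a i j y = a j i y) ∧
  ∃ lam Lam : ℝ, 0 < lam ∧ lam ≤ Lam ∧
    ∀ (y ξ : Fin n → ℝ),
      lam * (∑ i, ξ i ^ 2) ≤ ∑ i, ∑ j, a i j y * ξ i * ξ j ∧
      ∑ i, ∑ j, a i j y * ξ i * ξ j ≤ Lam * (∑ i, ξ i ^ 2)

/-- Corrector pair `(v^{kl}, ā_{kl})`. -/
def IsCorrector {n : ℕ} (a : Fin n → Fin n → (Fin n → ℝ) → ℝ)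
    (k l : Fin n) (v : (Fin n → ℝ) → ℝ) (abar : ℝ) : Prop :=
  ContDiff ℝ 2 v ∧ ZPeriodic v ∧
  ∀ y, -(∑ i, ∑ j, a i j y * pd2 v i j y) - a k l y = -abar

/-- Invariant measure for the matrix field `a`. -/
def IsInvariantMeasure {n : ℕ} (a : Fin n → Fin n → (Fin n → ℝ) → ℝ)
    (r : (Fin n → ℝ) → ℝ) : Prop :=
  ContDiff ℝ 2 r ∧ ZPeriodic r ∧ (∀ y, 0 < r y) ∧
  (∀ y, ∑ i, ∑ j, pd2 (fun x => a i j x * r x) i j y = 0) ∧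
  ∫ y in unitCube n, r y = 1

/-- `u` is Cᵐ on a neighborhood of the closure of `U`, with all partial
derivatives up to order `m` bounded there. -/
def SmoothBounded {n : ℕ} (m : ℕ) (U : Set (Fin n → ℝ)) (u : (Fin n → ℝ) → ℝ) : Prop :=
  ∃ V : Set (Fin n → ℝ), IsOpen V ∧ closure U ⊆ V ∧ ContDiffOn ℝ m u V ∧
    ∀ k : ℕ, k ≤ m → ∃ M : ℝ, ∀ x ∈ V, ‖iteratedFDerivWithin ℝ k u V x‖ ≤ M

section Helpers

variable {n : ℕ}

lemma contDiff_pd {f : (Fin n → ℝ) → ℝ} (hf : ContDiff ℝ 2 f) (i : Fin n) :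
    ContDiff ℝ 1 (pd f i) := by
  have h2 : ContDiff ℝ 1 (fderiv ℝ f) := by
    have h := (contDiff_succ_iff_fderiv (n := 1)).mp (by exact_mod_cast hf)
    exact h.2.2
  exact (ContinuousLinearMap.apply ℝ ℝ (Pi.single i 1)).contDiff.comp h2

lemma continuous_pd {f : (Fin n → ℝ) → ℝ} (hf : ContDiff ℝ 1 f) (i : Fin n) :
    Continuous (pd f i) := by
  have h2 := (contDiff_one_iff_fderiv.mp hf).2
  exact ((ContinuousLinearMap.apply ℝ ℝ (Pi.single i 1)).continuous).comp h2

lemma pd_add {f g : (Fin n → ℝ) → ℝ} (hf : Differentiable ℝ f)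
    (hg : Differentiable ℝ g) (i : Fin n) (y : Fin n → ℝ) :
    pd (fun x => f x + g x) i y = pd f i y + pd g i y := by
  simp [pd, fderiv_fun_add (hf y) (hg y)]

lemma pd_const_mul {f : (Fin n → ℝ) → ℝ} (hf : Differentiable ℝ f) (c : ℝ)
    (i : Fin n) (y : Fin n → ℝ) :
    pd (fun x => c * f x) i y = c * pd f i y := by
  simp [pd, fderiv_const_mul (hf y) c]

lemma pd_mul {f g : (Fin n → ℝ) → ℝ} (hf : Differentiable ℝ f)
    (hg : Differentiable ℝ g) (i : Fin n) (y : Fin n → ℝ) :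
    pd (fun x => f x * g x) i y = f y * pd g i y + g y * pd f i y := by
  simp [pd, fderiv_fun_mul (hf y) (hg y)]

lemma insertNth_one_eq {m : ℕ} (i : Fin (m + 1)) (x : Fin m → ℝ) :
    i.insertNth (1 : ℝ) x
      = (i.insertNth (0 : ℝ) x + Pi.single i 1 : Fin (m + 1) → ℝ) := by
  funext j
  rcases eq_or_ne j i with rfl | hj
  · simp
  · rcases Fin.exists_succAbove_eq hj with ⟨k, rfl⟩
    simp [Fin.insertNth_apply_succAbove, Pi.single_eq_of_ne (Fin.succAbove_ne i k)]

lemma single_int_cast {m : ℕ} (i : Fin m) :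
    (fun j => (((Pi.single i 1 : Fin m → ℤ) j : ℤ) : ℝ)) = Pi.single i (1 : ℝ) := by
  funext j
  rcases eq_or_ne j i with rfl | hj
  · simp
  · simp [Pi.single_eq_of_ne hj]

lemma integral_div_periodic (h : Fin n → ((Fin n → ℝ) → ℝ))
    (hC : ∀ i, ContDiff ℝ 1 (h i)) (hper : ∀ i, ZPeriodic (h i)) :
    ∫ y in unitCube n, ∑ i, pd (h i) i y = 0 := by
  cases n with
  | zero => simp
  | succ m =>
    have hle : (0 : Fin (m + 1) → ℝ) ≤ 1 := fun i => by norm_num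
    have Hi : MeasureTheory.IntegrableOn
        (fun x => ∑ i, fderiv ℝ (h i) x (Pi.single i 1))
        (Set.Icc (0 : Fin (m + 1) → ℝ) 1) :=
      (continuous_finset_sum _ fun i _ => continuous_pd (hC i) i).integrableOn_Icc
    have key := MeasureTheory.integral_divergence_of_hasFDerivAt_off_countable'
      (0 : Fin (m + 1) → ℝ) 1 hle h (fun i x => fderiv ℝ (h i) x) ∅ Set.countable_empty
      (fun i => (hC i).continuous.continuousOn)
      (fun x _ i => ((hC i).differentiable one_ne_zero x).hasFDerivAt) Hi
    have hzero : (∑ i : Fin (m + 1),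
        ((∫ x in Set.Icc ((0 : Fin (m + 1) → ℝ) ∘ i.succAbove)
            ((1 : Fin (m + 1) → ℝ) ∘ i.succAbove),
            h i (i.insertNth ((1 : Fin (m + 1) → ℝ) i) x)) -
          ∫ x in Set.Icc ((0 : Fin (m + 1) → ℝ) ∘ i.succAbove)
            ((1 : Fin (m + 1) → ℝ) ∘ i.succAbove),
            h i (i.insertNth ((0 : Fin (m + 1) → ℝ) i) x))) = 0 := by
      refine Finset.sum_eq_zero fun i _ => sub_eq_zero.mpr ?_
      have hpt : ∀ x : Fin m → ℝ,
          h i (i.insertNth ((1 : Fin (m + 1) → ℝ) i) x)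
            = h i (i.insertNth ((0 : Fin (m + 1) → ℝ) i) x) := by
        intro x
        show h i (i.insertNth 1 x) = h i (i.insertNth 0 x)
        rw [insertNth_one_eq]
        have := hper i (i.insertNth 0 x) (Pi.single i 1)
        rwa [single_int_cast] at this
      simp only [hpt]
    exact key.trans hzero

end Helpers

/-- Step 2 of the density proof: conformal perturbation
identity. With `γ = (1 + a¹_{ij}∂_i∂_jφ)⁻¹`, `a = γ a¹`, `r = r¹/γ`,
`v = v¹¹ + ā¹₁₁ φ`, the function `v` solves the `(1,1)`-cell problem for `a`,
`r` satisfies the invariant-measure equation, and `c^{11}_1` transforms by the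
stated formula. -/
theorem conformal_perturbation {n : ℕ}
    (i0 : Fin n) (hi0 : (i0 : ℕ) = 0)
    (a1 : Fin n → Fin n → (Fin n → ℝ) → ℝ) (hA1 : IsAdmissible a1)
    (r1 : (Fin n → ℝ) → ℝ) (hr1 : IsInvariantMeasure a1 r1)
    (v11 : (Fin n → ℝ) → ℝ) (abar11 : ℝ) (hcorr : IsCorrector a1 i0 i0 v11 abar11)
    (φ : (Fin n → ℝ) → ℝ) (hφC : ContDiff ℝ 2 φ) (hφper : ZPeriodic φ)
    (hφbd : ∀ y, 1 / 2 ≤ 1 + ∑ i, ∑ j, a1 i j y * pd2 φ i j y)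
    (γ : (Fin n → ℝ) → ℝ)
    (hγ : ∀ y, γ y = (1 + ∑ i, ∑ j, a1 i j y * pd2 φ i j y)⁻¹)
    (a : Fin n → Fin n → (Fin n → ℝ) → ℝ)
    (ha : ∀ i j y, a i j y = γ y * a1 i j y)
    (r : (Fin n → ℝ) → ℝ) (hrdef : ∀ y, r y = r1 y / γ y)
    (v : (Fin n → ℝ) → ℝ) (hvdef : ∀ y, v y = v11 y + abar11 * φ y) :
    (∀ y, -(∑ i, ∑ j, a i j y * pd2 v i j y) - a i0 i0 y = -abar11) ∧
    (∀ y, ∑ i, ∑ j, pd2 (fun x => a i j x * r x) i j y = 0) ∧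
    ((∫ y in unitCube n, (∑ i, a i i0 y * pd v i y) * r y)
      = (∫ y in unitCube n, (∑ i, a1 i i0 y * pd v11 i y) * r1 y)
        - abar11 * ∫ y in unitCube n,
            (∑ i, pd (fun x => a1 i i0 x * r1 x) i y) * φ y) := by
  have hSpos : ∀ y, (0 : ℝ) < 1 + ∑ i, ∑ j, a1 i j y * pd2 φ i j y :=
    fun y => lt_of_lt_of_le (by norm_num) (hφbd y)
  have hγpos : ∀ y, 0 < γ y := fun y => by rw [hγ y]; exact inv_pos.mpr (hSpos y)
  have hγmul : ∀ y, γ y * (1 + ∑ i, ∑ j, a1 i j y * pd2 φ i j y) = 1 := fun y => by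
    rw [hγ y]; exact inv_mul_cancel₀ (hSpos y).ne'
  have har : ∀ i j y, a i j y * r y = a1 i j y * r1 y := by
    intro i j y
    have hne : γ y ≠ 0 := (hγpos y).ne'
    rw [ha, hrdef]
    field_simp
  have harf : ∀ i j, (fun x => a i j x * r x) = fun x => a1 i j x * r1 x :=
    fun i j => funext fun y => har i j y
  have hv11C : ContDiff ℝ 2 v11 := hcorr.1
  have hdv11 : Differentiable ℝ v11 := hv11C.differentiable two_ne_zero
  have hdφ : Differentiable ℝ φ := hφC.differentiable two_ne_zero
  have hveq : v = fun y => v11 y + abar11 * φ y := funext hvdef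
  have hpdv : ∀ j y, pd v j y = pd v11 j y + abar11 * pd φ j y := by
    intro j y
    rw [hveq]
    have h1 := pd_add (f := v11) (g := fun x => abar11 * φ x) hdv11
      (hdφ.const_mul abar11) j y
    have h2 := pd_const_mul (f := φ) hdφ abar11 j y
    exact h1.trans (by rw [h2])
  have hpdvf : ∀ j, pd v j = fun y => pd v11 j y + abar11 * pd φ j y :=
    fun j => funext (hpdv j)
  have hdpdv11 : ∀ j, Differentiable ℝ (pd v11 j) :=
    fun j => (contDiff_pd hv11C j).differentiable one_ne_zero
  have hdpdφ : ∀ j, Differentiable ℝ (pd φ j) :=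
    fun j => (contDiff_pd hφC j).differentiable one_ne_zero
  have hpd2v : ∀ i j y, pd2 v i j y = pd2 v11 i j y + abar11 * pd2 φ i j y := by
    intro i j y
    show pd (pd v j) i y = pd (pd v11 j) i y + abar11 * pd (pd φ j) i y
    rw [hpdvf j]
    have h1 := pd_add (f := pd v11 j) (g := fun x => abar11 * pd φ j x)
      (hdpdv11 j) ((hdpdφ j).const_mul abar11) i y
    have h2 := pd_const_mul (f := pd φ j) (hdpdφ j) abar11 i y
    exact h1.trans (by rw [h2])
  refine ⟨?_, ?_, ?_⟩
  · -- part (i)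
    intro y
    have hterm : ∀ i j : Fin n, a i j y * pd2 v i j y
        = γ y * (a1 i j y * pd2 v11 i j y)
          + (abar11 * γ y) * (a1 i j y * pd2 φ i j y) := by
      intro i j; rw [ha, hpd2v]; ring
    have hsum : (∑ i, ∑ j, a i j y * pd2 v i j y)
        = γ y * (∑ i, ∑ j, a1 i j y * pd2 v11 i j y)
          + (abar11 * γ y) * (∑ i, ∑ j, a1 i j y * pd2 φ i j y) := by
      simp only [hterm, Finset.sum_add_distrib, Finset.mul_sum]
    have hc := hcorr.2.2 y
    have hg := hγmul y
    rw [hsum, ha]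
    linear_combination γ y * hc - abar11 * hg
  · -- part (ii)
    intro y
    have hpt : ∀ i j : Fin n, pd2 (fun x => a i j x * r x) i j y
        = pd2 (fun x => a1 i j x * r1 x) i j y := fun i j => by rw [harf i j]
    simp only [hpt]
    exact hr1.2.2.2.1 y
  · -- part (iii)
    have hr1c : Continuous r1 := hr1.1.continuous
    have hφc : Continuous φ := hφC.continuous
    have hpdv11c : ∀ i, Continuous (pd v11 i) :=
      fun i => (contDiff_pd hv11C i).continuous
    have hpdφc : ∀ i, Continuous (pd φ i) :=
      fun i => (contDiff_pd hφC i).continuous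
    have ha1r1C : ∀ i : Fin n, ContDiff ℝ 2 (fun x => a1 i i0 x * r1 x) :=
      fun i => (hA1.1 i i0).mul hr1.1
    have hpda1r1c : ∀ i : Fin n, Continuous (pd (fun x => a1 i i0 x * r1 x) i) :=
      fun i => (contDiff_pd (ha1r1C i) i).continuous
    have hda1r1 : ∀ i : Fin n, Differentiable ℝ (fun x => a1 i i0 x * r1 x) :=
      fun i => (ha1r1C i).differentiable two_ne_zero
    have key : ∀ y, (∑ i, a i i0 y * pd v i y) * r y
        = (∑ i, a1 i i0 y * pd v11 i y) * r1 y
          + abar11 * ∑ i, a1 i i0 y * r1 y * pd φ i y := by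
      intro y
      have hterm : ∀ i : Fin n, a i i0 y * pd v i y * r y
          = a1 i i0 y * pd v11 i y * r1 y
            + abar11 * (a1 i i0 y * r1 y * pd φ i y) := by
        intro i
        have h1 := har i i0 y
        rw [hpdv i y]
        linear_combination (pd v11 i y + abar11 * pd φ i y) * h1
      calc (∑ i, a i i0 y * pd v i y) * r y
          = ∑ i, a i i0 y * pd v i y * r y := by rw [Finset.sum_mul]
        _ = ∑ i, (a1 i i0 y * pd v11 i y * r1 y
              + abar11 * (a1 i i0 y * r1 y * pd φ i y)) := by
            exact Finset.sum_congr rfl fun i _ => hterm i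
        _ = (∑ i, a1 i i0 y * pd v11 i y) * r1 y
              + abar11 * ∑ i, a1 i i0 y * r1 y * pd φ i y := by
            rw [Finset.sum_add_distrib, ← Finset.mul_sum, ← Finset.sum_mul]
    have hF1c : Continuous (fun y => (∑ i, a1 i i0 y * pd v11 i y) * r1 y) :=
      (continuous_finset_sum _ fun i _ =>
        ((hA1.1 i i0).continuous.mul (hpdv11c i))).mul hr1c
    have hF2c : Continuous (fun y => ∑ i, a1 i i0 y * r1 y * pd φ i y) :=
      continuous_finset_sum _ fun i _ =>
        (((hA1.1 i i0).continuous.mul hr1c).mul (hpdφc i))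
    have hGc : Continuous
        (fun y => (∑ i, pd (fun x => a1 i i0 x * r1 x) i y) * φ y) :=
      (continuous_finset_sum _ fun i _ => hpda1r1c i).mul hφc
    have hF1int : MeasureTheory.IntegrableOn
        (fun y => (∑ i, a1 i i0 y * pd v11 i y) * r1 y) (unitCube n) :=
      hF1c.integrableOn_Icc
    have hF2int : MeasureTheory.IntegrableOn
        (fun y => abar11 * ∑ i, a1 i i0 y * r1 y * pd φ i y) (unitCube n) :=
      (continuous_const.mul hF2c).integrableOn_Icc
    have hF2int' : MeasureTheory.IntegrableOn
        (fun y => ∑ i, a1 i i0 y * r1 y * pd φ i y) (unitCube n) :=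
      hF2c.integrableOn_Icc
    have hGint : MeasureTheory.IntegrableOn
        (fun y => (∑ i, pd (fun x => a1 i i0 x * r1 x) i y) * φ y) (unitCube n) :=
      hGc.integrableOn_Icc
    have hdiv : (∫ y in unitCube n,
        ∑ i, pd (fun x => a1 i i0 x * r1 x * φ x) i y) = 0 := by
      refine integral_div_periodic _
        (fun i => (((hA1.1 i i0).mul hr1.1).mul hφC).of_le one_le_two) ?_
      intro i y z
      show a1 i i0 _ * r1 _ * φ _ = a1 i i0 y * r1 y * φ y
      rw [hA1.2.1 i i0 y z, hr1.2.1 y z, hφper y z]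
    have hsum2 : ∀ y, (∑ i, pd (fun x => a1 i i0 x * r1 x * φ x) i y)
        = (∑ i, a1 i i0 y * r1 y * pd φ i y)
          + (∑ i, pd (fun x => a1 i i0 x * r1 x) i y) * φ y := by
      intro y
      rw [Finset.sum_mul, ← Finset.sum_add_distrib]
      refine Finset.sum_congr rfl fun i _ => ?_
      have hm := pd_mul (f := fun x => a1 i i0 x * r1 x) (g := φ)
        (hda1r1 i) hdφ i y
      exact hm.trans (by ring)
    have h1 : (∫ y in unitCube n, ∑ i, pd (fun x => a1 i i0 x * r1 x * φ x) i y)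
        = ∫ y in unitCube n, ((∑ i, a1 i i0 y * r1 y * pd φ i y)
          + (∑ i, pd (fun x => a1 i i0 x * r1 x) i y) * φ y) := by
      simp only [hsum2]
    rw [MeasureTheory.integral_add hF2int' hGint] at h1
    have hFG : (∫ y in unitCube n, ∑ i, a1 i i0 y * r1 y * pd φ i y)
        + (∫ y in unitCube n, (∑ i, pd (fun x => a1 i i0 x * r1 x) i y) * φ y)
        = 0 := by rw [← h1]; exact hdiv
    simp only [key]
    rw [MeasureTheory.integral_add hF1int hF2int, MeasureTheory.integral_const_mul abar11]
    linear_combination abar11 * hFG
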